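/- Let p ≥ 3 be odd and let w₁₁, w₁₂ be the top-row entries of a product of (p−1)/2 matrices each of which is one of XY, X⁻¹Y, XY⁻¹, X⁻¹Y⁻¹ (with X, Y as above depending on m ≠ 0 and s), viewed as polynomials in s over ℂ(m). Then w₁₁ has degree exactly (p−1)/2 in s with leading coefficient ±1, and w₁₂ has degree strictly less than (p−1)/2 in s. Concretely, prove the closure property: if a 2×2 matrix A over ℂ(m)[s] has (1,1)-entry of s-degree n with leading coefficient ±1, entries (1,2),(2,2) of s-degree < n, and entry (2,1) of s-degree ≤ n, then A·B has the analogous property with degree n+1 for B any of the four matrices XY, X⁻¹Y, XY⁻¹, X⁻¹Y⁻¹. -/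

import Mathlib

open Polynomial

/-- A `2 × 2` matrix over `K[s]` whose `(1,1)`-entry has `s`-degree exactly `n` with
leading coefficient `±1`, whose `(1,2)`- and `(2,2)`-entries have `s`-degree `< n`,
and whose `(2,1)`-entry has `s`-degree `≤ n`. -/
def IsDegMatrix {K : Type*} [Field K] (n : ℕ) (A : Matrix (Fin 2) (Fin 2) K[X]) : Prop :=
  (A 0 0).degree = (n : WithBot ℕ) ∧
    ((A 0 0).leadingCoeff = 1 ∨ (A 0 0).leadingCoeff = -1) ∧
    (A 0 1).degree < (n : WithBot ℕ) ∧
    (A 1 1).degree < (n : WithBot ℕ) ∧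
    (A 1 0).degree ≤ (n : WithBot ℕ)

/-- The matrix `XY = [[m²+s, m⁻¹],[m⁻¹s, m⁻²]]` over `K[s]`. -/
noncomputable def matXY {K : Type*} [Field K] (m : K) : Matrix (Fin 2) (Fin 2) K[X] :=
  !![C (m ^ 2) + X, C m⁻¹; C m⁻¹ * X, C ((m ^ 2)⁻¹)]

/-- The matrix `X⁻¹Y = [[1−s, −m⁻¹],[ms, 1]]` over `K[s]`. -/
noncomputable def matXinvY {K : Type*} [Field K] (m : K) : Matrix (Fin 2) (Fin 2) K[X] :=
  !![1 - X, -C m⁻¹; C m * X, 1]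

/-- The matrix `XY⁻¹ = [[1−s, m],[−m⁻¹s, 1]]` over `K[s]`. -/
noncomputable def matXYinv {K : Type*} [Field K] (m : K) : Matrix (Fin 2) (Fin 2) K[X] :=
  !![1 - X, C m; -(C m⁻¹ * X), 1]

/-- The matrix `X⁻¹Y⁻¹ = [[m⁻²+s, −m],[−ms, m²]]` over `K[s]`. -/
noncomputable def matXinvYinv {K : Type*} [Field K] (m : K) : Matrix (Fin 2) (Fin 2) K[X] :=
  !![C ((m ^ 2)⁻¹) + X, -C m; -(C m * X), C (m ^ 2)]

/-- If `p` has degree `< a` and `q` has degree `≤ b` then `p*q` has degree `< a + b`. -/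
lemma degmul_lt {K : Type*} [Field K] (p q : K[X]) (a b : ℕ)
    (hp : p.degree < (a : WithBot ℕ)) (hq : q.degree ≤ (b : WithBot ℕ)) :
    (p * q).degree < ((a + b : ℕ) : WithBot ℕ) := by
  rcases eq_or_ne p 0 with rfl | h
  · rw [zero_mul, degree_zero]; exact WithBot.bot_lt_coe _
  · refine lt_of_le_of_lt (degree_mul_le _ _) ?_
    rw [degree_eq_natDegree h] at hp ⊢
    have h1 : p.natDegree + 1 ≤ a := by exact_mod_cast hp
    calc (p.natDegree : WithBot ℕ) + q.degree ≤ (p.natDegree : WithBot ℕ) + b :=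
        add_le_add le_rfl hq
      _ = ((p.natDegree + b : ℕ) : WithBot ℕ) := by push_cast; ring
      _ < ((a + b : ℕ) : WithBot ℕ) := by exact_mod_cast by omega

/-- If `p` has degree `≤ a` and `q` has degree `≤ b` then `p*q` has degree `≤ a + b`. -/
lemma degmul_le {K : Type*} [Field K] (p q : K[X]) (a b : ℕ)
    (hp : p.degree ≤ (a : WithBot ℕ)) (hq : q.degree ≤ (b : WithBot ℕ)) :
    (p * q).degree ≤ ((a + b : ℕ) : WithBot ℕ) := by
  refine le_trans (degree_mul_le _ _) ?_
  calc p.degree + q.degree ≤ (a : WithBot ℕ) + b := add_le_add hp hq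
    _ = ((a + b : ℕ) : WithBot ℕ) := by push_cast; ring

/-- The abstract closure property: multiplying an `n`-matrix by any matrix whose
`(1,1)`-entry has degree `1` with leading coefficient `±1`, whose `(1,2)`- and
`(2,2)`-entries are constants, and whose `(2,1)`-entry has degree `≤ 1`,
yields an `(n+1)`-matrix. -/
lemma degClosure {K : Type*} [Field K] (n : ℕ)
    (A B : Matrix (Fin 2) (Fin 2) K[X]) (hA : IsDegMatrix n A)
    (h00 : (B 0 0).degree = (1 : WithBot ℕ))
    (hlc : (B 0 0).leadingCoeff = 1 ∨ (B 0 0).leadingCoeff = -1)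
    (h01 : (B 0 1).degree ≤ (0 : WithBot ℕ))
    (h11 : (B 1 1).degree ≤ (0 : WithBot ℕ))
    (h10 : (B 1 0).degree ≤ (1 : WithBot ℕ)) :
    IsDegMatrix (n + 1) (A * B) := by
  obtain ⟨hA00, hAlc, hA01, hA11, hA10⟩ := hA
  have e : ∀ i j, (A * B) i j = A i 0 * B 0 j + A i 1 * B 1 j := by
    intro i j
    rw [Matrix.mul_apply, Fin.sum_univ_two]
  have h00' : (B 0 0).degree ≤ ((1:ℕ) : WithBot ℕ) := by rw [h00]; norm_num
  have h01' : (B 0 1).degree ≤ ((0:ℕ) : WithBot ℕ) := by exact_mod_cast h01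
  have h11' : (B 1 1).degree ≤ ((0:ℕ) : WithBot ℕ) := by exact_mod_cast h11
  have h10' : (B 1 0).degree ≤ ((1:ℕ) : WithBot ℕ) := by exact_mod_cast h10
  have hA00' : (A 0 0).degree ≤ (n : WithBot ℕ) := le_of_eq hA00
  have hbig : (A 0 0 * B 0 0).degree = ((n + 1 : ℕ) : WithBot ℕ) := by
    rw [degree_mul, hA00, h00]; push_cast; ring
  have hsmall : (A 0 1 * B 1 0).degree < ((n + 1 : ℕ) : WithBot ℕ) :=
    degmul_lt _ _ n 1 hA01 h10'
  refine ⟨?_, ?_, ?_, ?_, ?_⟩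
  · rw [e 0 0, degree_add_eq_left_of_degree_lt (by rw [hbig]; exact hsmall), hbig]
  · rw [e 0 0, leadingCoeff_add_of_degree_lt' (by rw [hbig]; exact hsmall),
      leadingCoeff_mul]
    rcases hAlc with h1 | h1 <;> rcases hlc with h2 | h2 <;> rw [h1, h2] <;> norm_num
  · rw [e 0 1]
    refine lt_of_le_of_lt (degree_add_le _ _) (max_lt ?_ ?_)
    · have := degmul_le (A 0 0) (B 0 1) n 0 hA00' h01'
      refine lt_of_le_of_lt this ?_
      exact_mod_cast by omega
    · have := degmul_lt (A 0 1) (B 1 1) n 0 hA01 h11'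
      refine lt_of_lt_of_le this ?_
      exact_mod_cast by omega
  · rw [e 1 1]
    refine lt_of_le_of_lt (degree_add_le _ _) (max_lt ?_ ?_)
    · have := degmul_le (A 1 0) (B 0 1) n 0 hA10 h01'
      refine lt_of_le_of_lt this ?_
      exact_mod_cast by omega
    · have := degmul_lt (A 1 1) (B 1 1) n 0 hA11 h11'
      refine lt_of_lt_of_le this ?_
      exact_mod_cast by omega
  · rw [e 1 0]
    refine le_trans (degree_add_le _ _) (max_le ?_ ?_)
    · exact degmul_le _ _ n 1 hA10 h00'
    · exact le_of_lt (degmul_lt _ _ n 1 hA11 h10')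

lemma deg_one_sub_X {K : Type*} [Field K] : (1 - X : K[X]).degree = (1 : WithBot ℕ) := by
  have : (1 - X : K[X]) = C (-1) * X + C 1 := by simp; ring
  rw [this, degree_linear (by norm_num)]

lemma lc_one_sub_X {K : Type*} [Field K] : (1 - X : K[X]).leadingCoeff = -1 := by
  have : (1 - X : K[X]) = C (-1) * X + C 1 := by simp; ring
  rw [this, leadingCoeff_linear (by norm_num)]

lemma deg_C_add_X {K : Type*} [Field K] (a : K) :
    (C a + X : K[X]).degree = (1 : WithBot ℕ) := by
  rw [add_comm, degree_X_add_C]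

lemma lc_C_add_X {K : Type*} [Field K] (a : K) :
    (C a + X : K[X]).leadingCoeff = 1 := by
  rw [add_comm]; exact (monic_X_add_C _).leadingCoeff

lemma deg_C_mul_X {K : Type*} [Field K] (a : K) :
    (C a * X : K[X]).degree ≤ (1 : WithBot ℕ) := by
  refine le_trans (degree_mul_le _ _) ?_
  calc (C a).degree + (X : K[X]).degree ≤ 0 + 1 := add_le_add degree_C_le degree_X_le
    _ = 1 := by norm_num

theorem stmt_19 {K : Type*} [Field K] (m : K) (hm : m ≠ 0) (n : ℕ)
    (A : Matrix (Fin 2) (Fin 2) K[X]) (hA : IsDegMatrix n A)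
    (B : Matrix (Fin 2) (Fin 2) K[X])
    (hB : B ∈ ({matXY m, matXinvY m, matXYinv m, matXinvYinv m} :
      Set (Matrix (Fin 2) (Fin 2) K[X]))) :
    IsDegMatrix (n + 1) (A * B) := by
  simp only [Set.mem_insert_iff, Set.mem_singleton_iff] at hB
  rcases hB with rfl | rfl | rfl | rfl <;>
    refine degClosure n A _ hA ?_ ?_ ?_ ?_ ?_ <;>
    simp only [matXY, matXinvY, matXYinv, matXinvYinv, Matrix.cons_val', Matrix.cons_val_zero,
      Matrix.cons_val_one, Matrix.head_cons, Matrix.empty_val', Matrix.cons_val_fin_one,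
      Matrix.head_fin_const, Matrix.of_apply]
  · exact deg_C_add_X _
  · exact Or.inl (lc_C_add_X _)
  · exact degree_C_le
  · exact degree_C_le
  · exact deg_C_mul_X _
  · exact deg_one_sub_X
  · exact Or.inr lc_one_sub_X
  · rw [degree_neg]; exact degree_C_le
  · exact degree_one_le
  · exact deg_C_mul_X _
  · exact deg_one_sub_X
  · exact Or.inr lc_one_sub_X
  · exact degree_C_le
  · exact degree_one_le
  · rw [degree_neg]; exact deg_C_mul_X _
  · exact deg_C_add_X _
  · exact Or.inl (lc_C_add_X _)
  · rw [degree_neg]; exact degree_C_le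
  · exact degree_C_le
  · rw [degree_neg]; exact deg_C_mul_X _
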